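/- If t_1, ..., t_r are positive real numbers with t_1 + ... + t_r = s^2 and s > 0, then the matrix A(s; t_1,...,t_r) has rank 2^{r-1}. -/

import Mathlib

/-- The matrix `A(s; t_1,...,t_r)` of the paper: rows and columns are indexed by
binary sequences `l : Fin r → Bool`.  Diagonal entries are `s`; if `l'` differs
from `l` exactly at position `i`, the entry is `-(-1)^{l_{i+1}+⋯+l_r} t_i` when
`l_i = 0` and `(-1)^{l_i+⋯+l_r} (= -(-1)^{l_{i+1}+⋯+l_r})` when `l_i = 1`;
all other entries vanish. -/
def Amat (r : ℕ) {R : Type*} [CommRing R] (s : R) (t : Fin r → R) :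
    Matrix (Fin r → Bool) (Fin r → Bool) R :=
  fun l l' =>
    (if l' = l then s else 0) +
      ∑ i : Fin r,
        if l' = Function.update l i (!(l i)) then
          -(-1 : R) ^ ((Finset.univ.filter fun j => i < j ∧ l j = true).card) *
            (if l i then 1 else t i)
        else 0

namespace AmatAux

variable {r : ℕ}

/-- The sign appearing in the entries of `Amat`. -/
noncomputable def sgn (i : Fin r) (l : Fin r → Bool) : ℝ :=
  -(-1 : ℝ) ^ ((Finset.univ.filter fun j => i < j ∧ l j = true).card)

/-- The summand matrices. -/
noncomputable def Mmat (t : Fin r → ℝ) (i : Fin r) :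
    Matrix (Fin r → Bool) (Fin r → Bool) ℝ :=
  fun l l' =>
    if l' = Function.update l i (!(l i)) then
      sgn i l * (if l i then 1 else t i)
    else 0

lemma Amat_eq (s : ℝ) (t : Fin r → ℝ) :
    Amat r s t = s • (1 : Matrix (Fin r → Bool) (Fin r → Bool) ℝ) + ∑ i, Mmat t i := by
  funext l l'
  simp only [Amat, Mmat, sgn, Matrix.add_apply, Matrix.smul_apply, Matrix.one_apply,
    Matrix.sum_apply, smul_eq_mul, mul_ite, mul_one, mul_zero]
  congr 1
  by_cases h : l' = l
  · simp [h]
  · rw [if_neg h, if_neg (fun hh => h hh.symm)]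

lemma sgn_sq (i : Fin r) (l : Fin r → Bool) : sgn i l * sgn i l = 1 := by
  unfold sgn
  rw [neg_mul_neg, ← pow_add]
  exact Even.neg_one_pow ⟨_, rfl⟩

lemma sgn_update_of_le {i j : Fin r} (h : i ≤ j) (l : Fin r → Bool) (b : Bool) :
    sgn j (Function.update l i b) = sgn j l := by
  unfold sgn
  have hfil : (Finset.univ.filter fun k => j < k ∧ (Function.update l i b) k = true) =
      (Finset.univ.filter fun k => j < k ∧ l k = true) := by
    apply Finset.filter_congr
    intro k _
    by_cases hk : j < k
    · rw [Function.update_of_ne (lt_of_le_of_lt h hk).ne']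
    · simp [hk]
  rw [hfil]

lemma sgn_update_of_lt {i j : Fin r} (h : i < j) (l : Fin r → Bool) :
    sgn i (Function.update l j (!(l j))) = - sgn i l := by
  unfold sgn
  set S : Finset (Fin r) := Finset.univ.filter fun k => i < k ∧ l k = true with hS
  set S' : Finset (Fin r) :=
    Finset.univ.filter fun k => i < k ∧ (Function.update l j (!(l j))) k = true with hS'
  cases hlj : l j with
  | true =>
      have hmem : j ∈ S := by simp [hS, h, hlj]
      have hSe : S' = S.erase j := by
        ext k
        by_cases hk : k = j
        · subst hk; simp [hS', hlj]
        · simp [hS', hS, hk, Function.update_of_ne hk]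
      have hpos : 0 < S.card := Finset.card_pos.2 ⟨j, hmem⟩
      have hcard : S.card = S'.card + 1 := by
        rw [hSe, Finset.card_erase_of_mem hmem]
        omega
      rw [hcard, pow_succ]
      ring
  | false =>
      have hmem : j ∉ S := by simp [hS, hlj]
      have hSe : S' = insert j S := by
        ext k
        by_cases hk : k = j
        · subst hk; simp [hS', hlj, h]
        · simp [hS', hS, hk, Function.update_of_ne hk]
      have hcard : S'.card = S.card + 1 := by
        rw [hSe, Finset.card_insert_of_notMem hmem]
      rw [hcard, pow_succ]
      ring

lemma mul_apply_aux (t : Fin r → ℝ) (i j : Fin r) (l l' : Fin r → Bool) :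
    (Mmat t i * Mmat t j) l l' =
      (sgn i l * (if l i then 1 else t i)) * Mmat t j (Function.update l i (!(l i))) l' := by
  rw [Matrix.mul_apply]
  simp only [Mmat, ite_mul, zero_mul]
  simp [Finset.sum_ite_eq']

lemma update_update (l : Fin r → Bool) (i : Fin r) :
    Function.update (Function.update l i (!(l i))) i (!(!(l i))) = l := by
  simp [Function.update_idem]

lemma update_update' (l : Fin r → Bool) (i : Fin r) :
    Function.update (Function.update l i (!(l i))) i (l i) = l := by
  simp [Function.update_idem]

lemma Mmat_sq (t : Fin r → ℝ) (i : Fin r) :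
    Mmat t i * Mmat t i = t i • (1 : Matrix (Fin r → Bool) (Fin r → Bool) ℝ) := by
  funext l l'
  rw [mul_apply_aux]
  simp only [Mmat, Function.update_self, update_update, update_update',
    sgn_update_of_le (le_refl i), Matrix.smul_apply, Matrix.one_apply, smul_eq_mul]
  by_cases h : l' = l
  · rw [if_pos h, if_pos h.symm, mul_one]
    cases hli : l i <;> simp [hli] <;>
      linear_combination (t i) * sgn_sq i l
  · rw [if_neg h, mul_zero, if_neg (fun hh => h hh.symm), mul_zero]

lemma Mmat_anticomm (t : Fin r → ℝ) {i j : Fin r} (h : i < j) :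
    Mmat t i * Mmat t j + Mmat t j * Mmat t i = 0 := by
  funext l l'
  rw [Matrix.add_apply, mul_apply_aux, mul_apply_aux, Matrix.zero_apply]
  simp only [Mmat, Function.update_of_ne h.ne', Function.update_of_ne h.ne,
    sgn_update_of_le h.le, sgn_update_of_lt h, Function.update_comm h.ne]
  by_cases hc : l' = Function.update (Function.update l j (!(l j))) i (!(l i))
  · rw [if_pos hc, if_pos hc]; ring
  · rw [if_neg hc, if_neg hc]; ring

lemma key (t : Fin r → ℝ) (i j : Fin r) :
    Mmat t i * Mmat t j + Mmat t j * Mmat t i =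
      if i = j then (2 * t i) • (1 : Matrix (Fin r → Bool) (Fin r → Bool) ℝ) else 0 := by
  rcases lt_trichotomy i j with hlt | heq | hgt
  · rw [if_neg hlt.ne, Mmat_anticomm t hlt]
  · subst heq
    rw [if_pos rfl, Mmat_sq, two_mul, add_smul]
  · rw [if_neg hgt.ne', add_comm, Mmat_anticomm t hgt]

lemma N_sq (t : Fin r → ℝ) :
    (∑ i, Mmat t i) * (∑ i, Mmat t i) =
      (∑ i, t i) • (1 : Matrix (Fin r → Bool) (Fin r → Bool) ℝ) := by
  set N := ∑ i, Mmat t i with hN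
  have e1 : N * N = ∑ i, ∑ j, Mmat t i * Mmat t j := Finset.sum_mul_sum _ _ _ _
  have e2 : N * N = ∑ i, ∑ j, Mmat t j * Mmat t i := by
    rw [e1]; exact Finset.sum_comm
  have h2 : N * N + N * N = (∑ i, 2 * t i) • (1 : Matrix (Fin r → Bool) (Fin r → Bool) ℝ) := by
    nth_rewrite 1 [e1]
    nth_rewrite 1 [e2]
    rw [← Finset.sum_add_distrib]
    simp_rw [← Finset.sum_add_distrib, key, Finset.sum_ite_eq, Finset.mem_univ, if_pos,
      Finset.sum_smul]
  have h3 : (2 : ℝ) • (N * N) = (2 : ℝ) • ((∑ i, t i) • (1 : Matrix (Fin r → Bool) (Fin r → Bool) ℝ)) := by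
    rw [two_smul, h2, smul_smul, ← Finset.mul_sum]
  exact smul_right_injective _ (two_ne_zero) h3

lemma Amat_mul_self (s : ℝ) (t : Fin r → ℝ) (hsum : ∑ i, t i = s ^ 2) :
    Amat r s t * Amat r s t = (2 * s) • Amat r s t := by
  rw [Amat_eq s t]
  set N := ∑ i, Mmat t i with hN
  have hNN : N * N = (s ^ 2) • (1 : Matrix (Fin r → Bool) (Fin r → Bool) ℝ) := by
    rw [N_sq, hsum]
  rw [add_mul, mul_add, mul_add, hNN]
  simp only [smul_mul_assoc, mul_smul_comm, one_mul, mul_one]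
  module

lemma diag_ne_update (l : Fin r → Bool) (i : Fin r) :
    l ≠ Function.update l i (!(l i)) := by
  intro h
  have := congrFun h i
  simp at this

lemma Amat_trace (s : ℝ) (t : Fin r → ℝ) :
    (Amat r s t).trace = (2 : ℝ) ^ r * s := by
  have : ∀ l : Fin r → Bool, Amat r s t l l = s := by
    intro l
    simp [Amat, fun i => diag_ne_update l i]
  rw [Matrix.trace]
  simp only [Matrix.diag_apply, this, Finset.sum_const, Finset.card_univ]
  simp [Fintype.card_fun, mul_comm]

/-- The rank of an idempotent real matrix equals its trace. -/
lemma rank_eq_trace_of_idem {n : Type*} [Fintype n] [DecidableEq n]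
    (P : Matrix n n ℝ) (h : P * P = P) : ((P.rank : ℝ)) = P.trace := by
  have hf : P.mulVecLin ∘ₗ P.mulVecLin = P.mulVecLin := by
    rw [← Matrix.mulVecLin_mul, h]
  obtain ⟨p, hp⟩ := (LinearMap.isProj_iff_isIdempotentElem _).mpr hf
  have hrange : p = LinearMap.range P.mulVecLin := by
    apply le_antisymm
    · intro x hx
      exact ⟨x, hp.2 x hx⟩
    · rintro _ ⟨x, rfl⟩
      exact hp.1 x
  have htr : LinearMap.trace ℝ (n → ℝ) P.mulVecLin = Matrix.trace P := by
    rw [LinearMap.trace_eq_matrix_trace ℝ (Pi.basisFun ℝ n), LinearMap.toMatrix_eq_toMatrix',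
      ← Matrix.toLin'_apply', LinearMap.toMatrix'_toLin']
  have := hp.trace
  rw [htr] at this
  rw [this, hrange]
  rfl

end AmatAux

theorem rank_Amat (r : ℕ) (hr : 1 < r) (s : ℝ) (hs : 0 < s) (t : Fin r → ℝ)
    (ht : ∀ i, 0 < t i) (hsum : ∑ i, t i = s ^ 2) :
    (Amat r s t).rank = 2 ^ (r - 1) := by
  have h2s : (2 * s) ≠ 0 := by positivity
  set A := Amat r s t with hA
  set P : Matrix (Fin r → Bool) (Fin r → Bool) ℝ := (2 * s)⁻¹ • A with hP
  have hAA : A * A = (2 * s) • A := AmatAux.Amat_mul_self s t hsum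
  have hPP : P * P = P := by
    rw [hP, smul_mul_assoc, Matrix.mul_smul, hAA, smul_smul, smul_smul]
    congr 1
    field_simp
  have hsmul : ((2 * s)⁻¹ • A).mulVecLin = (2 * s)⁻¹ • A.mulVecLin := by
    apply LinearMap.ext
    intro v
    simp [Matrix.mulVecLin_apply, Matrix.smul_mulVec]
  have hrank : P.rank = A.rank := by
    rw [Matrix.rank, Matrix.rank, hP, hsmul,
      LinearMap.range_smul _ _ (inv_ne_zero h2s)]
  have htr : P.trace = (2 : ℝ) ^ (r - 1) := by
    rw [hP, Matrix.trace_smul, hA, AmatAux.Amat_trace, smul_eq_mul]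
    have hr' : r = (r - 1) + 1 := by omega
    rw [hr', pow_succ]
    field_simp
    ring
    simp
  have := AmatAux.rank_eq_trace_of_idem P hPP
  rw [htr] at this
  have hfin : (P.rank : ℝ) = ((2 ^ (r - 1) : ℕ) : ℝ) := by
    rw [this]; push_cast; ring
  have : P.rank = 2 ^ (r - 1) := Nat.cast_injective hfin
  rw [← hrank, this]
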